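/- For all natural numbers r and p with p > 0 and every real x with |x| < 2, Σ_{n=1}^∞ C(n+r,n) n^p (ζ(n+1) − 1) x^n = (1/r!) Σ_{j=0}^p S(p,j) (r+j)! A(r,x,j) x^j, where A(r,x,j) = Σ_{m=0}^r C(r,m) x^m ζ(m+j+1, 2−x) and the series on the left converges absolutely. (Since p > 0, S(p,0) = 0, so every Hurwitz zeta value appearing with nonzero coefficient is well defined.) -/

import Mathlib

open Finset Real

/-- Stirling numbers of the second kind. -/
def stirling2 : ℕ → ℕ → ℕ
  | 0, 0 => 1
  | 0, _ + 1 => 0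
  | _ + 1, 0 => 0
  | n + 1, k + 1 => (k + 1) * stirling2 n (k + 1) + stirling2 n k

/-- The Riemann zeta function `ζ(s) = Σ_{m=1}^∞ m^{-s}` (for real `s > 1`). -/
noncomputable def realZeta (s : ℝ) : ℝ := ∑' m : ℕ, 1 / ((m : ℝ) + 1) ^ s

/-- The Hurwitz zeta function `ζ(s,a) = Σ_{k=0}^∞ (k+a)^{-s}` (for real `a > 0`, `s > 1`). -/
noncomputable def hurwitzZetaReal (s a : ℝ) : ℝ := ∑' k : ℕ, 1 / ((k : ℝ) + a) ^ s

lemma stirling2_zero_right : ∀ n, stirling2 (n+1) 0 = 0 := fun _ => rfl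

lemma stirling2_eq_zero_of_lt : ∀ n k, n < k → stirling2 n k = 0
  | 0, _+1, _ => rfl
  | n+1, k+1, h => by
    have h1 := stirling2_eq_zero_of_lt n (k+1) (by omega)
    have h2 := stirling2_eq_zero_of_lt n k (by omega)
    simp [stirling2, h1, h2]

lemma mul_descFactorial (n j : ℕ) :
    n * n.descFactorial j = n.descFactorial (j+1) + j * n.descFactorial j := by
  rcases le_or_gt j n with h | h
  · rw [Nat.descFactorial_succ]
    have : n - j + j = n := Nat.sub_add_cancel h
    nlinarith [Nat.sub_add_cancel h]
  · rw [Nat.descFactorial_of_lt h, Nat.descFactorial_of_lt (by omega)]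
    simp

lemma pow_eq_sum_stirling (p n : ℕ) :
    n ^ p = ∑ j ∈ range (p+1), stirling2 p j * n.descFactorial j := by
  induction p with
  | zero => simp [stirling2]
  | succ p ih =>
    have : n ^ (p+1) = ∑ j ∈ range (p+1), stirling2 p j *
        (n.descFactorial (j+1) + j * n.descFactorial j) := by
      rw [pow_succ, ih, Finset.sum_mul]
      refine Finset.sum_congr rfl fun j _ => ?_
      rw [mul_assoc, mul_comm (Nat.descFactorial n j) n, mul_descFactorial]
    rw [this]
    rw [Finset.sum_range_succ' (fun j => stirling2 (p+1) j * n.descFactorial j) (p+1)]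
    simp only [stirling2_zero_right, Nat.zero_mul, Nat.add_zero]
    have : ∀ j, stirling2 (p+1) (j+1) = (j+1) * stirling2 p (j+1) + stirling2 p j := fun j => rfl
    simp only [this]
    rw [Finset.sum_congr rfl (fun j _ => by ring :
      ∀ j ∈ range (p+1), ((j+1) * stirling2 p (j+1) + stirling2 p j) * n.descFactorial (j+1)
        = (j+1) * stirling2 p (j+1) * n.descFactorial (j+1) + stirling2 p j * n.descFactorial (j+1)),
      Finset.sum_add_distrib]
    have e1 : ∑ j ∈ range (p+1), (j+1) * stirling2 p (j+1) * n.descFactorial (j+1)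
        = ∑ j ∈ range (p+1), stirling2 p j * (j * n.descFactorial j) := by
      rw [Finset.sum_range_succ' (fun j => stirling2 p j * (j * n.descFactorial j)) p]
      simp only [Nat.mul_zero, Nat.zero_mul, Nat.add_zero]
      rw [Finset.sum_range_succ]
      rw [stirling2_eq_zero_of_lt p (p+1) (by omega)]
      simp only [Nat.zero_mul, Nat.mul_zero, Nat.add_zero]
      exact Finset.sum_congr rfl fun j _ => by ring
    rw [e1]
    rw [Finset.sum_congr rfl (fun j _ => by ring :
      ∀ j ∈ range (p+1), stirling2 p j * (n.descFactorial (j+1) + j * n.descFactorial j)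
        = stirling2 p j * n.descFactorial (j+1) + stirling2 p j * (j * n.descFactorial j)),
      Finset.sum_add_distrib]
    exact Nat.add_comm _ _

lemma key_nat (r n j : ℕ) :
    r.factorial * ((n+r).choose n * n.descFactorial j)
      = (r+j).factorial * (n+r).choose (r+j) := by
  rcases le_or_gt j n with h | h
  · apply Nat.eq_of_mul_eq_mul_right (Nat.factorial_pos (n-j))
    have hd : (n - j).factorial * n.descFactorial j = n.factorial :=
      Nat.factorial_mul_descFactorial h
    have hc1 : (n+r).choose n * n.factorial * r.factorial = (n+r).factorial := by
      have := Nat.choose_mul_factorial_mul_factorial (Nat.le_add_right n r)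
      simpa using this
    have hc2 : (n+r).choose (r+j) * (r+j).factorial * (n-j).factorial = (n+r).factorial := by
      have hle : r + j ≤ n + r := by omega
      have := Nat.choose_mul_factorial_mul_factorial hle
      have hsub : n + r - (r + j) = n - j := by omega
      rwa [hsub] at this
    calc r.factorial * ((n+r).choose n * n.descFactorial j) * (n-j).factorial
        = (n+r).choose n * n.factorial * r.factorial := by
          rw [← hd]; ring
      _ = (n+r).factorial := hc1
      _ = (r+j).factorial * (n+r).choose (r+j) * (n-j).factorial := by rw [← hc2]; ring
  · rw [Nat.descFactorial_of_lt h, Nat.choose_eq_zero_of_lt (show n+r < r+j by omega)]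
    simp

lemma summable_aux {a : ℝ} (ha : 0 < a) {q : ℕ} (hq : 2 ≤ q) :
    Summable fun k : ℕ => 1/((k:ℝ)+a)^q := by
  set c := min a 1 with hc
  have hc0 : 0 < c := lt_min ha one_pos
  have hbase : Summable fun k : ℕ => 1/((k:ℝ)+1)^2 := by
    have := (summable_nat_add_iff (f := fun n : ℕ => 1 / (n : ℝ) ^ 2) 1).2
      (summable_one_div_nat_pow.2 one_lt_two)
    simpa using this
  refine Summable.of_nonneg_of_le (fun k => by positivity) (fun k => ?_)
    (hbase.mul_left (1/c^q))
  · have h1 : c * ((k:ℝ)+1) ≤ (k:ℝ)+a := by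
      have h2 : c ≤ a := min_le_left _ _
      have h3 : c ≤ 1 := min_le_right _ _
      nlinarith [Nat.cast_nonneg (α := ℝ) k]
    have h4 : ((k:ℝ)+1)^2 ≤ ((k:ℝ)+1)^q := by
      apply pow_le_pow_right₀ (by linarith [Nat.cast_nonneg (α := ℝ) k]) hq
    have h5 : c^q * ((k:ℝ)+1)^2 ≤ ((k:ℝ)+a)^q := by
      calc c^q * ((k:ℝ)+1)^2 ≤ c^q * ((k:ℝ)+1)^q := by
            apply mul_le_mul_of_nonneg_left h4 (by positivity)
        _ = (c * ((k:ℝ)+1))^q := (mul_pow _ _ _).symm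
        _ ≤ ((k:ℝ)+a)^q := by
            apply pow_le_pow_left₀ (by positivity) h1
    rw [one_div, one_div, one_div, ← mul_inv]
    exact inv_anti₀ (by positivity) h5

lemma hasSum_hurwitz {a : ℝ} (ha : 0 < a) {q : ℕ} (hq : 2 ≤ q) :
    HasSum (fun k : ℕ => 1/((k:ℝ)+a)^q) (hurwitzZetaReal q a) := by
  have hs := (summable_aux ha hq).hasSum
  convert hs using 1
  unfold hurwitzZetaReal
  exact tsum_congr fun k => by rw [Real.rpow_natCast]

lemma hasSum_zeta_tail {q : ℕ} (hq : 2 ≤ q) :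
    HasSum (fun k : ℕ => 1/((k:ℝ)+2)^q) (realZeta q - 1) := by
  have hsum : Summable fun m : ℕ => 1/((m:ℝ)+1)^q := summable_aux one_pos hq
  have h1 : HasSum (fun m : ℕ => 1/((m:ℝ)+1)^q) (realZeta q) := by
    convert hsum.hasSum using 1
    unfold realZeta
    exact tsum_congr fun k => by rw [Real.rpow_natCast]
  have := (hasSum_nat_add_iff' (f := fun m : ℕ => 1/((m:ℝ)+1)^q) 1).2 h1
  simp only [Finset.range_one, Finset.sum_singleton, Nat.cast_zero] at this
  norm_num at this
  convert this using 2 with k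
  · rfl
  push_cast
  ring

lemma key_nat2 (r p n : ℕ) :
    r.factorial * ((n+r).choose n * n^p)
      = ∑ j ∈ range (p+1), stirling2 p j * ((r+j).factorial * (n+r).choose (r+j)) := by
  rw [pow_eq_sum_stirling, Finset.mul_sum, Finset.mul_sum]
  refine Finset.sum_congr rfl fun j _ => ?_
  rw [show r.factorial * ((n+r).choose n * (stirling2 p j * n.descFactorial j))
      = stirling2 p j * (r.factorial * ((n+r).choose n * n.descFactorial j)) from by ring,
    key_nat]

lemma choose_pow_eq (r p n : ℕ) :
    ((n+r).choose n : ℝ) * (n:ℝ)^p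
      = ∑ j ∈ range (p+1), (stirling2 p j : ℝ) * ((r+j).factorial : ℝ) / (r.factorial : ℝ)
          * ((n+r).choose (r+j) : ℝ) := by
  have hR : (r.factorial : ℝ) ≠ 0 := Nat.cast_ne_zero.2 r.factorial_ne_zero
  have hcast : (r.factorial : ℝ) * (((n+r).choose n : ℝ) * (n:ℝ)^p)
      = ∑ j ∈ range (p+1), (stirling2 p j : ℝ) * (((r+j).factorial : ℝ)
          * ((n+r).choose (r+j) : ℝ)) := by
    exact_mod_cast congrArg (Nat.cast (R := ℝ)) (key_nat2 r p n)
  apply mul_left_cancel₀ hR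
  rw [hcast, Finset.mul_sum]
  exact Finset.sum_congr rfl fun j _ => by field_simp

lemma hasSum_main (r p : ℕ) {t : ℝ} (ht : |t| < 1) :
    HasSum (fun n : ℕ => ((n+r).choose n : ℝ) * (n:ℝ)^p * t^n)
      (∑ j ∈ range (p+1), (stirling2 p j : ℝ) * ((r+j).factorial : ℝ) / (r.factorial : ℝ)
        * (t^j / (1-t)^(r+j+1))) := by
  have hj : ∀ j : ℕ, HasSum (fun n : ℕ => ((n+r).choose (r+j) : ℝ) * t^n)
      (t^j / (1-t)^(r+j+1)) := by
    intro j
    have hbase := hasSum_choose_mul_geometric_of_norm_lt_one (𝕜 := ℝ) (r+j)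
      (by simpa [Real.norm_eq_abs] using ht)
    have h2 := hbase.mul_left (t^j)
    have h3 : HasSum (fun m : ℕ => ((m + j + r).choose (r+j) : ℝ) * t^(m+j))
        (t^j / (1-t)^(r+j+1) - ∑ i ∈ range j, ((i+r).choose (r+j) : ℝ) * t^i) := by
      have hz : ∑ i ∈ range j, ((i+r).choose (r+j) : ℝ) * t^i = 0 := by
        refine Finset.sum_eq_zero fun i hi => ?_
        rw [Nat.choose_eq_zero_of_lt (by simp at hi; omega)]
        simp
      have hv : t ^ j / (1-t)^(r+j+1) = t^j * (1/(1-t)^(r+j+1)) := by ring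
      rw [hz, sub_zero, hv]
      convert h2 using 1
      · rfl
      funext m
      rw [show m + j + r = m + (r + j) by omega, pow_add]
      ring
    exact (hasSum_nat_add_iff' (f := fun n : ℕ => ((n+r).choose (r+j) : ℝ) * t^n) j).1
      (by convert h3 using 1)
  have hs := hasSum_sum (s := range (p+1))
    (f := fun j n => (stirling2 p j : ℝ) * ((r+j).factorial : ℝ) / (r.factorial : ℝ)
      * (((n+r).choose (r+j) : ℝ) * t^n))
    (a := fun j => (stirling2 p j : ℝ) * ((r+j).factorial : ℝ) / (r.factorial : ℝ)
      * (t^j / (1-t)^(r+j+1)))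
    (fun j _ => (hj j).mul_left _)
  convert hs using 2 with n
  rw [show ((n+r).choose n : ℝ) * (n:ℝ)^p * t^n
      = (((n+r).choose n : ℝ) * (n:ℝ)^p) * t^n from by ring, choose_pow_eq r p n,
    Finset.sum_mul]
  exact Finset.sum_congr rfl fun j _ => by ring

lemma pow_frac {B : ℝ} (hB : B ≠ 0) {m r j : ℕ} (hm : m ≤ r) :
    B^(r-m) / B^(r+j+1) = 1 / B^(m+j+1) := by
  rw [show r+j+1 = (r-m) + (m+j+1) by omega, pow_add]
  rw [div_eq_div_iff (by positivity) (by positivity)]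
  ring

lemma hasSum_k' (r p : ℕ) {y A : ℝ} (hy : |y| < 2) (hA2 : 2 ≤ A) :
    HasSum (fun n : ℕ => ((n+r).choose n : ℝ) * (n:ℝ)^p * y^n / A^(n+1))
      (∑ j ∈ range (p+1), (stirling2 p j : ℝ) * ((r+j).factorial : ℝ) / (r.factorial : ℝ) * y^j
        * (∑ m ∈ range (r+1), (r.choose m : ℝ) * y^m / (A-y)^(m+j+1))) := by
  have hA0 : (0:ℝ) < A := by linarith
  have hB0 : (0:ℝ) < A - y := by have := abs_lt.1 hy; linarith
  have ht : |y / A| < 1 := by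
    rw [abs_div, abs_of_pos hA0, div_lt_one hA0]
    have := abs_lt.1 hy; linarith
  have h := (hasSum_main r p ht).div_const A
  have h1t : 1 - y/A = (A-y)/A := by field_simp
  convert h using 1
  · rfl
  · funext n
    rw [div_pow, pow_succ]
    field_simp
  · rw [Finset.sum_div]
    refine Finset.sum_congr rfl fun j _ => ?_
    have hexp : A ^ r = ∑ m ∈ range (r+1), y^m * (A-y)^(r-m) * (r.choose m : ℝ) := by
      have h2 := add_pow y (A - y) r
      rw [show y + (A - y) = A by ring] at h2
      exact h2
    have hval : (y/A) ^ j / (1-(y/A))^(r+j+1) / A = y^j * A^r / (A-y)^(r+j+1) := by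
      rw [h1t, div_pow, div_pow, div_div_div_eq, div_div]
      rw [div_eq_div_iff (by positivity) (by positivity)]
      ring
    have hgoal : (y/A)^j/(1-(y/A))^(r+j+1)/A
        = y^j * ∑ m ∈ range (r+1), (r.choose m : ℝ) * y^m / (A-y)^(m+j+1) := by
      rw [hval, hexp, Finset.mul_sum, Finset.sum_div, Finset.mul_sum]
      refine Finset.sum_congr rfl fun m hm => ?_
      have hmr : m ≤ r := by simp at hm; omega
      rw [show y^j * (y ^ m * (A-y) ^ (r - m) * (r.choose m : ℝ)) / (A-y)^(r+j+1)
          = (r.choose m : ℝ) * y^m * y^j * ((A-y)^(r-m)/(A-y)^(r+j+1)) from by ring,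
        pow_frac hB0.ne' hmr]
      ring
    linear_combination (-((stirling2 p j : ℝ) * (((r+j).factorial : ℝ) / (r.factorial : ℝ)))) * hgoal

lemma hasSum_G (r p : ℕ) (hp : 0 < p) {y : ℝ} (hy : |y| < 2) :
    HasSum (fun k : ℕ => ∑ j ∈ range (p+1),
        (stirling2 p j : ℝ) * ((r+j).factorial : ℝ) / (r.factorial : ℝ) * y^j
        * (∑ m ∈ range (r+1), (r.choose m : ℝ) * y^m / (((k:ℝ)+2)-y)^(m+j+1)))
      (∑ j ∈ range (p+1),
        (stirling2 p j : ℝ) * ((r+j).factorial : ℝ) / (r.factorial : ℝ) * y^j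
        * (∑ m ∈ range (r+1), (r.choose m : ℝ) * y^m
            * hurwitzZetaReal ((m:ℝ)+(j:ℝ)+1) (2-y))) := by
  have hay : (0:ℝ) < 2 - y := by have := abs_lt.1 hy; linarith
  refine hasSum_sum fun j _ => ?_
  rcases Nat.eq_zero_or_pos j with rfl | hj
  · obtain ⟨q, rfl⟩ : ∃ q, p = q + 1 := ⟨p - 1, by omega⟩
    have hz : stirling2 (q+1) 0 = 0 := rfl
    simp only [hz, Nat.cast_zero, zero_mul, mul_zero, zero_div, zero_mul]
    exact hasSum_zero
  · refine HasSum.mul_left _ ?_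
    refine hasSum_sum fun m _ => ?_
    have hq : 2 ≤ m + j + 1 := by omega
    have h := (hasSum_hurwitz hay hq).mul_left ((r.choose m : ℝ) * y^m)
    convert h using 1
    · funext k
      rw [show (k:ℝ) + 2 - y = (k:ℝ) + (2 - y) by ring]
      rw [mul_one_div]
    · rw [show ((m:ℝ)+(j:ℝ)+1) = ((m+j+1 : ℕ) : ℝ) by push_cast; ring]


set_option maxHeartbeats 1000000 in
/-- For naturals `r`, `p` with `p > 0` and real `|x| < 2`,
`Σ_{n=1}^∞ C(n+r,n) n^p (ζ(n+1) − 1) x^n = (1/r!) Σ_{j=0}^p S(p,j) (r+j)! A(r,x,j) x^j`,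
where `A(r,x,j) = Σ_{m=0}^r C(r,m) x^m ζ(m+j+1, 2−x)`,
with the series on the left converging absolutely. -/
theorem series_zeta_values' (r p : ℕ) (hp : 0 < p) (x : ℝ) (hx : |x| < 2) :
    (Summable fun n : ℕ =>
      |(Nat.choose (n + 1 + r) (n + 1) : ℝ) * ((n : ℝ) + 1) ^ p *
        (realZeta ((n : ℝ) + 1 + 1) - 1) * x ^ (n + 1)|) ∧
    HasSum (fun n : ℕ =>
      (Nat.choose (n + 1 + r) (n + 1) : ℝ) * ((n : ℝ) + 1) ^ p *
        (realZeta ((n : ℝ) + 1 + 1) - 1) * x ^ (n + 1))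
      (1 / (r.factorial : ℝ) * ∑ j ∈ Finset.range (p + 1),
        (stirling2 p j : ℝ) * ((r + j).factorial : ℝ) *
          (∑ m ∈ Finset.range (r + 1),
            (Nat.choose r m : ℝ) * x ^ m * hurwitzZetaReal ((m : ℝ) + (j : ℝ) + 1) (2 - x)) *
          x ^ j) := by
  have hxa : |(|x|)| < 2 := by rwa [abs_abs]
  have hA2 : ∀ k : ℕ, (2:ℝ) ≤ (k:ℝ)+2 := fun k => by linarith [Nat.cast_nonneg (α := ℝ) k]
  set F : ℕ × ℕ → ℝ := fun q =>
    ((q.2+r).choose q.2 : ℝ) * (q.2:ℝ)^p * x^q.2 / ((q.1:ℝ)+2)^(q.2+1) with hFdef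
  -- absolute values
  have hFapp : ∀ k n : ℕ, F (k,n) = ((n+r).choose n : ℝ) * (n:ℝ)^p * x^n / ((k:ℝ)+2)^(n+1) :=
    fun k n => rfl
  have habs_pt : ∀ k n : ℕ, |F (k,n)|
      = ((n+r).choose n : ℝ) * (n:ℝ)^p * |x|^n / ((k:ℝ)+2)^(n+1) := by
    intro k n
    rw [hFapp]
    rw [abs_div, abs_mul, abs_mul, abs_pow, abs_pow, abs_pow, Nat.abs_cast, Nat.abs_cast,
      abs_of_nonneg (show (0:ℝ) ≤ (k:ℝ)+2 by positivity)]
  -- fiberwise (n-direction) sums, for x and |x|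
  have hfib : ∀ k : ℕ, HasSum (fun n => F (k,n))
      (∑ j ∈ range (p+1),
        (stirling2 p j : ℝ) * ((r+j).factorial : ℝ) / (r.factorial : ℝ) * x^j
        * (∑ m ∈ range (r+1), (r.choose m : ℝ) * x^m / (((k:ℝ)+2)-x)^(m+j+1))) := by
    intro k
    exact (hasSum_k' r p hx (hA2 k)).congr_fun fun n => hFapp k n
  have hfib_abs : ∀ k : ℕ, HasSum (fun n => |F (k,n)|)
      (∑ j ∈ range (p+1),
        (stirling2 p j : ℝ) * ((r+j).factorial : ℝ) / (r.factorial : ℝ) * |x|^j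
        * (∑ m ∈ range (r+1), (r.choose m : ℝ) * |x|^m / (((k:ℝ)+2)-|x|)^(m+j+1))) := by
    intro k
    exact (hasSum_k' r p hxa (hA2 k)).congr_fun fun n => habs_pt k n
  -- joint absolute summability
  have habsJoint : Summable (fun q : ℕ × ℕ => |F q|) := by
    rw [summable_prod_of_nonneg (fun q => abs_nonneg _)]
    refine ⟨fun k => (hfib_abs k).summable, ?_⟩
    refine Summable.congr (hasSum_G r p hp hxa).summable fun k => ?_
    exact ((hfib_abs k).tsum_eq).symm
  have hFsummable : Summable F := habsJoint.of_abs
  have hT := hFsummable.hasSum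
  set T : ℝ := ∑' q, F q with hTdef
  -- sum in k-fibers
  have hGk : HasSum (fun k : ℕ => ∑ j ∈ range (p+1),
        (stirling2 p j : ℝ) * ((r+j).factorial : ℝ) / (r.factorial : ℝ) * x^j
        * (∑ m ∈ range (r+1), (r.choose m : ℝ) * x^m / (((k:ℝ)+2)-x)^(m+j+1))) T :=
    hT.prod_fiberwise hfib
  have hTval : T = ∑ j ∈ range (p+1),
        (stirling2 p j : ℝ) * ((r+j).factorial : ℝ) / (r.factorial : ℝ) * x^j
        * (∑ m ∈ range (r+1), (r.choose m : ℝ) * x^m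
            * hurwitzZetaReal ((m:ℝ)+(j:ℝ)+1) (2-x)) :=
    hGk.unique (hasSum_G r p hp hx)
  -- swap
  have hQ : HasSum (fun q : ℕ × ℕ => F (q.2, q.1)) T :=
    ((Equiv.prodComm ℕ ℕ).hasSum_iff).2 hT
  have hQabs : Summable (fun q : ℕ × ℕ => |F (q.2, q.1)|) :=
    ((Equiv.prodComm ℕ ℕ).summable_iff).2 habsJoint
  -- n-fiberwise sums
  set h : ℕ → ℝ := fun n =>
    ((n+r).choose n : ℝ) * (n:ℝ)^p * (realZeta ((n:ℝ)+1) - 1) * x^n with hhdef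
  have hn : ∀ n : ℕ, HasSum (fun k => F (k, n)) (h n) := by
    intro n
    match n with
    | 0 =>
      have hz : ∀ k : ℕ, F (k, 0) = 0 := by
        intro k
        rw [hFapp]
        simp [zero_pow hp.ne']
      have hz2 : h 0 = 0 := by
        rw [hhdef]
        simp [zero_pow hp.ne']
      rw [hz2]
      exact HasSum.congr_fun hasSum_zero fun k => hz k
    | n + 1 =>
      have hq : 2 ≤ n + 2 := by omega
      have hzt := (hasSum_zeta_tail hq).mul_left
        (((n+1+r).choose (n+1) : ℝ) * ((n+1:ℕ):ℝ)^p * x^(n+1))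
      convert hzt using 1
      · rfl
      · funext k
        rw [hFapp, mul_one_div]
      · rw [hhdef]
        rw [show (((n+2:ℕ)):ℝ) = (n:ℝ)+1+1 by push_cast; ring]
        push_cast
        ring
  have hH : HasSum h T := hQ.prod_fiberwise hn
  have hh0 : h 0 = 0 := by
    rw [hhdef]
    simp [zero_pow hp.ne']
  have hH1 : HasSum (fun n => h (n+1)) T := by
    have := (hasSum_nat_add_iff' (f := h) 1).2 hH
    simpa [hh0] using this
  -- identify statement function with h (n+1)
  have hfun : ∀ n : ℕ, (Nat.choose (n + 1 + r) (n + 1) : ℝ) * ((n : ℝ) + 1) ^ p *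
        (realZeta ((n : ℝ) + 1 + 1) - 1) * x ^ (n + 1) = h (n+1) := by
    intro n
    rw [hhdef]
    push_cast
    ring_nf
  -- identify the target value
  have hRHS : T = 1 / (r.factorial : ℝ) * ∑ j ∈ Finset.range (p + 1),
        (stirling2 p j : ℝ) * ((r + j).factorial : ℝ) *
          (∑ m ∈ Finset.range (r + 1),
            (Nat.choose r m : ℝ) * x ^ m * hurwitzZetaReal ((m : ℝ) + (j : ℝ) + 1) (2 - x)) *
          x ^ j := by
    rw [hTval, Finset.mul_sum]
    exact Finset.sum_congr rfl fun j _ => by ring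
  constructor
  · -- summability of absolute values
    have hsum2 : Summable (fun n => ∑' k, |F (k, n)|) :=
      ((summable_prod_of_nonneg (fun q => abs_nonneg _)).1 hQabs).2
    refine Summable.of_nonneg_of_le (fun n => abs_nonneg _) (fun n => ?_)
      ((summable_nat_add_iff 1).2 hsum2)
    rw [hfun n]
    have hsk : Summable fun k => |F (k, n+1)| :=
      ((summable_prod_of_nonneg (fun q => abs_nonneg _)).1 hQabs).1 (n+1)
    calc |h (n+1)| = |∑' k, F (k, n+1)| := by rw [(hn (n+1)).tsum_eq]
      _ ≤ ∑' k, |F (k, n+1)| := by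
          have := norm_tsum_le_tsum_norm (f := fun k => F (k, n+1))
            (by simpa [Real.norm_eq_abs] using hsk)
          simpa [Real.norm_eq_abs] using this
  · rw [← hRHS]
    exact HasSum.congr_fun hH1 fun n => hfun n
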